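/- Let (U, V, W) be a cosuspended TTF triple in a triangulated category T (i.e. (U, V) is a t-structure and (V, W) is a co-t-structure) such that the t-structure (U, V) is nondegenerate. Then V = {}^{⊥>0}𝒞, where 𝒞 = V ∩ W[-1] is the coheart of (V, W); that is, an object X lies in V if and only if Hom_T(X, C[k]) = 0 for all C ∈ 𝒞 and all k > 0. -/

import Mathlib

open CategoryTheory Limits Pretriangulated

universe v u

variable {C : Type u} [Category.{v} C] [Preadditive C] [HasZeroObject C] [HasShift C ℤ]
  [∀ n : ℤ, (shiftFunctor C n).Additive] [Pretriangulated C]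

/-- `X` is a direct summand (retract) of `Y`. -/
def IsSummand {C : Type u} [Category.{v} C] (X Y : C) : Prop :=
  ∃ (i : X ⟶ Y) (r : Y ⟶ X), i ≫ r = 𝟙 X

/-- A torsion pair `(𝒰, 𝒱)` in a triangulated category: both classes are closed under
direct summands, all morphisms from `𝒰` to `𝒱` vanish, and every object fits
in a triangle `U ⟶ X ⟶ V ⟶ U⟦1⟧` with `U ∈ 𝒰` and `V ∈ 𝒱`. -/
structure TorsionPair (𝒰 𝒱 : Set C) : Prop where
  summand_left : ∀ ⦃X Y : C⦄, IsSummand X Y → Y ∈ 𝒰 → X ∈ 𝒰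
  summand_right : ∀ ⦃X Y : C⦄, IsSummand X Y → Y ∈ 𝒱 → X ∈ 𝒱
  hom_zero : ∀ ⦃X Y : C⦄, X ∈ 𝒰 → Y ∈ 𝒱 → ∀ f : X ⟶ Y, f = 0
  exists_triangle : ∀ X : C, ∃ (U V : C) (_ : U ∈ 𝒰) (_ : V ∈ 𝒱)
    (f : U ⟶ X) (g : X ⟶ V) (h : V ⟶ U⟦(1 : ℤ)⟧), Triangle.mk f g h ∈ distTriang C

/-- An isomorphism exhibits its source as a summand of its target. -/
lemma isSummand_of_iso {X Y : C} (e : X ≅ Y) : IsSummand X Y :=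
  ⟨e.hom, e.inv, e.hom_inv_id⟩

/-- If a morphism vanishes after shifting, it vanishes. -/
lemma eq_zero_of_shift_eq_zero {X Y : C} (n : ℤ) (f : X ⟶ Y)
    (h : (shiftFunctor C n).map f = 0) : f = 0 :=
  (shiftFunctor C n).map_injective (by rw [h, Functor.map_zero])

/-- An object receiving only zero maps from the left class lies in the right class. -/
lemma TorsionPair.mem_right_of_hom_zero {𝒜 ℬ : Set C} (h : TorsionPair 𝒜 ℬ) {Y : C}
    (hy : ∀ A ∈ 𝒜, ∀ f : A ⟶ Y, f = 0) : Y ∈ ℬ := by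
  obtain ⟨A, B, hA, hB, f, g, w, hT⟩ := h.exists_triangle Y
  obtain ⟨r, hr⟩ := Triangle.yoneda_exact₂ _ hT (𝟙 Y)
    (by erw [hy A hA f]; exact zero_comp)
  exact h.summand_right ⟨g, r, hr.symm⟩ hB

/-- An object sending only zero maps to the right class lies in the left class. -/
lemma TorsionPair.mem_left_of_hom_zero {𝒜 ℬ : Set C} (h : TorsionPair 𝒜 ℬ) {Y : C}
    (hy : ∀ B ∈ ℬ, ∀ f : Y ⟶ B, f = 0) : Y ∈ 𝒜 := by
  obtain ⟨A, B, hA, hB, f, g, w, hT⟩ := h.exists_triangle Y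
  obtain ⟨i, hi⟩ := Triangle.coyoneda_exact₂ _ hT (𝟙 Y)
    (by erw [hy B hB g]; exact comp_zero)
  exact h.summand_left ⟨i, f, hi.symm⟩ hA

/-- For a cosuspended TTF triple `(𝒰, 𝒱, 𝒲)` with nondegenerate t-structure `(𝒰, 𝒱)`,
the class `𝒱` equals `{}^{⊥>0}𝒞` where `𝒞 = 𝒱 ∩ 𝒲⟦-1⟧` is the coheart: an object `X`
lies in `𝒱` iff `Hom(X, Cc⟦k⟧) = 0` for all `Cc ∈ 𝒞` and all `k > 0`. -/
theorem stmt11 (𝒰 𝒱 𝒲 : Set C)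
    (h₁ : TorsionPair 𝒰 𝒱) (h₂ : TorsionPair 𝒱 𝒲)
    (ht : ∀ X ∈ 𝒰, X⟦(1 : ℤ)⟧ ∈ 𝒰) (hco : ∀ X ∈ 𝒱, X⟦(-1 : ℤ)⟧ ∈ 𝒱)
    (hnd₁ : ∀ X : C, (∀ n : ℤ, X⟦n⟧ ∈ 𝒰) → IsZero X)
    (hnd₂ : ∀ X : C, (∀ n : ℤ, X⟦n⟧ ∈ 𝒱) → IsZero X) :
    𝒱 = {X : C | ∀ Cc : C, Cc ∈ 𝒱 → Cc⟦(1 : ℤ)⟧ ∈ 𝒲 →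
      ∀ k : ℤ, 0 < k → ∀ f : X ⟶ Cc⟦k⟧, f = 0} := by
  -- 𝒱 is closed under nonpositive shifts
  have hVneg : ∀ (n : ℕ), ∀ X ∈ 𝒱, X⟦-(n : ℤ)⟧ ∈ 𝒱 := by
    intro n
    induction n with
    | zero =>
      intro X hX
      exact h₁.summand_right
        (isSummand_of_iso ((shiftFunctorZero C ℤ).app X)) hX
    | succ n ih =>
      intro X hX
      have e : X⟦-((n : ℤ) + 1)⟧ ≅ X⟦-(n : ℤ)⟧⟦(-1 : ℤ)⟧ :=
        (shiftFunctorAdd' C (-(n : ℤ)) (-1) (-((n : ℤ) + 1)) (by ring)).app X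
      have := hco _ (ih X hX)
      exact h₁.summand_right (isSummand_of_iso (e.trans (Iso.refl _)))
        (by push_cast at this ⊢; exact this)
  have hVnonpos : ∀ (m : ℤ), m ≤ 0 → ∀ X ∈ 𝒱, X⟦m⟧ ∈ 𝒱 := by
    intro m hm X hX
    have hmn : m = -((-m).toNat : ℤ) := by omega
    rw [hmn]
    exact hVneg _ X hX
  -- Forward inclusion: every object of 𝒱 lies in the orthogonal
  have hVsub : ∀ X ∈ 𝒱, ∀ Cc : C, Cc ∈ 𝒱 → Cc⟦(1 : ℤ)⟧ ∈ 𝒲 →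
      ∀ k : ℤ, 0 < k → ∀ f : X ⟶ Cc⟦k⟧, f = 0 := by
    intro X hX Cc hCc hCc1 k hk f
    apply eq_zero_of_shift_eq_zero (1 - k)
    have e : Cc⟦(1 : ℤ)⟧ ≅ Cc⟦k⟧⟦(1 : ℤ) - k⟧ :=
      (shiftFunctorAdd' C k (1 - k) 1 (by ring)).app Cc
    have hz : (shiftFunctor C (1 - k)).map f ≫ e.inv = 0 :=
      h₂.hom_zero (hVnonpos (1 - k) (by omega) X hX) hCc1 _
    calc (shiftFunctor C (1 - k)).map f
        = ((shiftFunctor C (1 - k)).map f ≫ e.inv) ≫ e.hom := by simp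
      _ = 0 := by rw [hz, zero_comp]
  -- Key step: maps from 𝒰-objects orthogonal to the coheart into 𝒱⟦1⟧ vanish
  have hV1 : ∀ Y ∈ 𝒰, (∀ Cc ∈ 𝒱, Cc⟦(1 : ℤ)⟧ ∈ 𝒲 → ∀ f : Y ⟶ Cc⟦(1 : ℤ)⟧, f = 0) →
      ∀ V ∈ 𝒱, ∀ h : Y ⟶ V⟦(1 : ℤ)⟧, h = 0 := by
    intro Y hY horth V hV h
    obtain ⟨V₁, W, hV₁, hW, a, b, c, hT⟩ := h₂.exists_triangle (V⟦(1 : ℤ)⟧)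
    set T : Triangle C := Triangle.mk a b c with hTdef
    have hT₂ : T.invRotate.invRotate ∈ distTriang C :=
      inv_rot_of_distTriang _ (inv_rot_of_distTriang _ hT)
    -- W⟦-1⟧ lies in 𝒱
    have hWm : W⟦(-1 : ℤ)⟧ ∈ 𝒱 := by
      apply h₂.mem_left_of_hom_zero
      intro W' hW' f
      have hVV : (V⟦(1 : ℤ)⟧)⟦(-1 : ℤ)⟧ ∈ 𝒱 :=
        h₁.summand_right
          (isSummand_of_iso (((shiftEquiv C (1 : ℤ)).unitIso.app V).symm)) hV
      have hcond : T.invRotate.invRotate.mor₁ ≫ f = 0 :=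
        h₂.hom_zero hVV hW' _
      obtain ⟨g, hg⟩ := Triangle.yoneda_exact₂ _ hT₂ f hcond
      rw [hg, h₂.hom_zero hV₁ hW' g]; exact comp_zero
    -- W⟦-1⟧⟦1⟧ lies in 𝒲
    have hWm1 : (W⟦(-1 : ℤ)⟧)⟦(1 : ℤ)⟧ ∈ 𝒲 :=
      h₂.summand_right
        (isSummand_of_iso ((shiftEquiv C (1 : ℤ)).counitIso.app W)) hW
    -- the composite Y ⟶ W vanishes
    have hb : h ≫ b = 0 := by
      have := horth (W⟦(-1 : ℤ)⟧) hWm hWm1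
        (h ≫ b ≫ ((shiftEquiv C (1 : ℤ)).counitIso.app W).inv)
      calc h ≫ b
          = (h ≫ b ≫ ((shiftEquiv C (1 : ℤ)).counitIso.app W).inv) ≫
              ((shiftEquiv C (1 : ℤ)).counitIso.app W).hom := by simp
        _ = 0 := by erw [this]; exact zero_comp
    obtain ⟨g, hg⟩ := Triangle.coyoneda_exact₂ _ hT h hb
    rw [hg, h₁.hom_zero hY hV₁ g]; exact zero_comp
  -- Descent: one step down
  have hstep : ∀ Y, Y ∈ 𝒰 →
      (∀ Cc ∈ 𝒱, Cc⟦(1 : ℤ)⟧ ∈ 𝒲 → ∀ f : Y ⟶ Cc⟦(1 : ℤ)⟧, f = 0) →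
      Y⟦(-1 : ℤ)⟧ ∈ 𝒰 := by
    intro Y hY horth
    apply h₁.mem_left_of_hom_zero
    intro V hV f
    apply eq_zero_of_shift_eq_zero 1
    set e := (shiftEquiv C (1 : ℤ)).counitIso.app Y with he
    have hz : e.inv ≫ (shiftFunctor C (1 : ℤ)).map f = 0 :=
      hV1 Y hY horth V hV _
    exact (e.hom_inv_id_assoc _).symm.trans (by erw [hz]; exact comp_zero)
  -- The combined predicate
  set P : C → Prop := fun Y => Y ∈ 𝒰 ∧ ∀ Cc ∈ 𝒱, Cc⟦(1 : ℤ)⟧ ∈ 𝒲 →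
      ∀ k : ℤ, 0 < k → ∀ f : Y ⟶ Cc⟦k⟧, f = 0 with hPdef
  have P_iso : ∀ {X Y : C}, (X ≅ Y) → P Y → P X := by
    intro X Y e hP
    refine ⟨h₁.summand_left (isSummand_of_iso e) hP.1, ?_⟩
    intro Cc hCc hCc1 k hk f
    have := hP.2 Cc hCc hCc1 k hk (e.inv ≫ f)
    calc f = e.hom ≫ (e.inv ≫ f) := by simp
      _ = 0 := by rw [this, comp_zero]
  have Pstep : ∀ Y, P Y → P (Y⟦(-1 : ℤ)⟧) := by
    intro Y hP
    refine ⟨hstep Y hP.1 (fun Cc hCc hCc1 f => hP.2 Cc hCc hCc1 1 one_pos f), ?_⟩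
    intro Cc hCc hCc1 k hk f
    apply eq_zero_of_shift_eq_zero 1
    set eY := (shiftEquiv C (1 : ℤ)).counitIso.app Y with heY
    have eCc : Cc⟦k + 1⟧ ≅ Cc⟦k⟧⟦(1 : ℤ)⟧ := (shiftFunctorAdd' C k 1 (k + 1) rfl).app Cc
    have hz : eY.inv ≫ (shiftFunctor C (1 : ℤ)).map f ≫ eCc.inv = 0 :=
      hP.2 Cc hCc hCc1 (k + 1) (by omega) _
    refine Eq.trans (b := eY.hom ≫ (eY.inv ≫ (shiftFunctor C (1 : ℤ)).map f ≫ eCc.inv) ≫ eCc.hom) ?_ ?_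
    · simp; erw [Category.assoc, Iso.inv_hom_id, Category.comp_id]; rfl
    · erw [hz]; rw [zero_comp]; exact comp_zero
  -- all shifts of a P-object are in 𝒰
  have hallshift : ∀ Y, P Y → ∀ n : ℤ, Y⟦n⟧ ∈ 𝒰 := by
    intro Y hP
    have hneg : ∀ n : ℕ, P (Y⟦-(n : ℤ)⟧) := by
      intro n
      induction n with
      | zero => exact P_iso ((shiftFunctorZero C ℤ).app Y) hP
      | succ n ih =>
        exact P_iso ((shiftFunctorAdd' C (-(n : ℤ)) (-1) (-((n + 1 : ℕ) : ℤ))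
          (by push_cast; ring)).app Y) (Pstep _ ih)
    have hpos : ∀ n : ℕ, Y⟦(n : ℤ)⟧ ∈ 𝒰 := by
      intro n
      induction n with
      | zero =>
        exact h₁.summand_left (isSummand_of_iso ((shiftFunctorZero C ℤ).app Y)) hP.1
      | succ n ih =>
        exact h₁.summand_left (isSummand_of_iso ((shiftFunctorAdd' C (n : ℤ) 1
          (((n + 1 : ℕ)) : ℤ) (by push_cast; ring)).app Y)) (ht _ ih)
    intro n
    rcases le_or_gt 0 n with hn | hn
    · have : n = (n.toNat : ℤ) := by omega
      rw [this]; exact hpos _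
    · have : n = -(((-n).toNat : ℤ)) := by omega
      rw [this]; exact (hneg _).1
  -- Conclusion
  apply Set.Subset.antisymm
  · intro X hX
    exact fun Cc hCc hCc1 k hk f => hVsub X hX Cc hCc hCc1 k hk f
  · intro X hX
    simp only [Set.mem_setOf_eq] at hX
    obtain ⟨U, V, hU, hV, f, g, w, hT⟩ := h₁.exists_triangle X
    set T : Triangle C := Triangle.mk f g w with hTdef
    have hT' : T.invRotate ∈ distTriang C := inv_rot_of_distTriang _ hT
    -- U is orthogonal to the coheart
    have hUorth : ∀ Cc ∈ 𝒱, Cc⟦(1 : ℤ)⟧ ∈ 𝒲 → ∀ k : ℤ, 0 < k →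
        ∀ φ : U ⟶ Cc⟦k⟧, φ = 0 := by
      intro Cc hCc hCc1 k hk φ
      have hcond : T.invRotate.mor₁ ≫ φ = 0 := by
        apply eq_zero_of_shift_eq_zero 1
        set eV := (shiftEquiv C (1 : ℤ)).counitIso.app V with heV
        have eCc : Cc⟦k + 1⟧ ≅ Cc⟦k⟧⟦(1 : ℤ)⟧ := (shiftFunctorAdd' C k 1 (k + 1) rfl).app Cc
        have hz : eV.inv ≫ (shiftFunctor C (1 : ℤ)).map (T.invRotate.mor₁ ≫ φ) ≫ eCc.inv
            = 0 := hVsub V hV Cc hCc hCc1 (k + 1) (by omega) _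
        refine Eq.trans (b := eV.hom ≫ (eV.inv ≫ (shiftFunctor C (1 : ℤ)).map (T.invRotate.mor₁ ≫ φ)
                ≫ eCc.inv) ≫ eCc.hom) ?_ ?_
        · simp; erw [Category.assoc, Iso.inv_hom_id, Category.comp_id]; rfl
        · erw [hz]; rw [zero_comp]; exact comp_zero
      obtain ⟨ψ, hψ⟩ := Triangle.yoneda_exact₂ _ hT' φ hcond
      rw [hψ, hX Cc hCc hCc1 k hk ψ]; exact comp_zero
    -- U is zero
    have hUzero : IsZero U := hnd₁ U (hallshift U ⟨hU, hUorth⟩)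
    have hf0 : f = 0 := hUzero.eq_of_src f 0
    obtain ⟨r, hr⟩ := Triangle.yoneda_exact₂ _ hT (𝟙 X) (by show f ≫ 𝟙 X = 0; rw [hf0]; simp)
    exact h₁.summand_right ⟨g, r, hr.symm⟩ hV
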